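/- Every F-linear trace (not necessarily non-degenerate) on a finite-dimensional semisimple algebra over a field F vanishes on all nilpotent elements. -/
import Mathlib

/-- A semisimple ring is von Neumann regular. -/
lemma semisimple_vnr (A : Type*) [Ring A] [IsSemisimpleRing A] (x : A) :
    ∃ c : A, x = x * c * x := by
  obtain ⟨N, hN⟩ := exists_isCompl (Submodule.span A {x})
  have h1 : (1 : A) ∈ Submodule.span A {x} ⊔ N := by
    rw [hN.sup_eq_top]; trivial
  obtain ⟨p, hp, q, hq, hpq⟩ := Submodule.mem_sup.mp h1
  obtain ⟨c, hc⟩ := Submodule.mem_span_singleton.mp hp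
  refine ⟨c, ?_⟩
  have hxq : x * q ∈ N := N.smul_mem x hq
  have hxp : x * p ∈ Submodule.span A {x} := by
    rw [← hc, smul_eq_mul, ← mul_assoc]
    simpa using Submodule.smul_mem _ (x * c) (Submodule.mem_span_singleton_self x)
  have hsum : x * p + x * q = x := by
    have := congrArg (fun t => x * t) hpq
    simpa [mul_add] using this
  have hxq' : x * q ∈ Submodule.span A {x} := by
    have h2 : x * q = x - x * p := eq_sub_of_add_eq' hsum
    rw [h2]
    exact Submodule.sub_mem _ (Submodule.mem_span_singleton_self x) hxp
  have hzero : x * q = 0 := by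
    have := hN.disjoint.le_bot ⟨hxq', hxq⟩
    simpa using this
  have hxp' : x = x * p := by
    rw [hzero, add_zero] at hsum
    exact hsum.symm
  calc x = x * p := hxp'
  _ = x * (c * x) := by rw [← hc, smul_eq_mul]
  _ = x * c * x := by rw [mul_assoc]

/-- Every linear trace on a finite-dimensional semisimple algebra over a field vanishes
on nilpotent elements. -/
theorem trace_on_semisimple_vanishes_on_nilpotents
    (F A : Type*) [Field F] [Ring A] [Algebra F A] [FiniteDimensional F A]
    [IsSemisimpleRing A]
    (tr : A →ₗ[F] F)
    (htr : ∀ a b : A, tr (a * b) = tr (b * a))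
    (a : A) (ha : IsNilpotent a) :
    tr a = 0 := by
  obtain ⟨n, hn⟩ := ha
  induction n generalizing a with
  | zero =>
      simp only [pow_zero] at hn
      have : a = 0 := by
        calc a = a * 1 := (mul_one a).symm
        _ = a * 0 := by rw [hn]
        _ = 0 := mul_zero a
      simp [this]
  | succ n ih =>
      rcases Nat.eq_zero_or_pos n with h0 | hpos
      · subst h0
        simp only [zero_add, pow_one] at hn
        rw [hn, map_zero]
      · obtain ⟨c, hc⟩ := semisimple_vnr A a
        set e := a * c with he
        have hea : e * a = a := hc.symm
        have hee : e * e = e := by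
          have h1 : e * e = (e * a) * c := by rw [he]; noncomm_ring
          rw [h1, hea, ← he]
        have hpow : ∀ k : ℕ, (a * e) ^ (k + 1) = a ^ (k + 1) * e := by
          intro k
          induction k with
          | zero => simp
          | succ m ihm =>
              calc (a * e) ^ (m + 2) = (a * e) ^ (m + 1) * (a * e) := pow_succ _ _
              _ = a ^ (m + 1) * e * (a * e) := by rw [ihm]
              _ = a ^ (m + 1) * (e * a) * e := by noncomm_ring
              _ = a ^ (m + 1) * a * e := by rw [hea]
              _ = a ^ (m + 2) * e := by rw [← pow_succ]
        have hnil : (a * e) ^ n = 0 := by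
          obtain ⟨m, rfl⟩ := Nat.exists_eq_succ_of_ne_zero (Nat.pos_iff_ne_zero.mp hpos)
          rw [hpow m, he, ← mul_assoc, ← pow_succ, hn, zero_mul]
        have htr0 : tr a = tr (a * e) := by
          have key : e * (a * (1 - e)) = a - a * e := by
            rw [← mul_assoc, hea, mul_sub, mul_one]
          have h3 : a * (1 - e) * e = 0 := by
            rw [mul_assoc, sub_mul, one_mul, hee, sub_self, mul_zero]
          have h4 : tr (a - a * e) = 0 := by
            rw [← key, htr e (a * (1 - e)), h3, map_zero]
          have h5 : tr a - tr (a * e) = 0 := by rw [← map_sub]; exact h4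
          exact sub_eq_zero.mp h5
        rw [htr0]
        exact ih (a * e) hnil
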